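/- Let φ be a continuous flow on a compact metric space X. If the set of fixed points of φ is open in X, then φ does not have periodic points with arbitrarily small periods; that is, there exists T* > 0 such that no non-fixed point x satisfies φ_T(x) = x for some 0 < T < T*. -/

import Mathlib

theorem stmt0 {X : Type*} [MetricSpace X] [CompactSpace X]
    (φ : ℝ → X → X)
    (hcont : Continuous fun p : ℝ × X => φ p.1 p.2)
    (h0 : ∀ x, φ 0 x = x)
    (hadd : ∀ t s x, φ (t + s) x = φ t (φ s x))
    (hopen : IsOpen {x : X | ∀ t, φ t x = x}) :
    ∃ Tstar > (0:ℝ), ∀ x : X, (¬ ∀ t, φ t x = x) →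
      ∀ T : ℝ, 0 < T → T < Tstar → φ T x ≠ x := by
  by_contra h
  push_neg at h
  -- multiples of a period are periods
  have key : ∀ (T : ℝ) (x : X), φ T x = x → ∀ k : ℤ, φ ((k : ℝ) * T) x = x := by
    intro T x hx k
    have hneg : φ (-T) x = x := by
      conv_lhs => rw [← hx, ← hadd]
      simp [h0]
    induction k using Int.induction_on with
    | zero => simpa using h0 x
    | succ k ih =>
        push_cast at ih ⊢
        rw [show ((k : ℝ) + 1) * T = T + (k : ℝ) * T by ring, hadd, ih, hx]
    | pred k ih =>
        push_cast at ih ⊢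
        rw [show (-(k : ℝ) - 1) * T = (-T) + (-(k : ℝ)) * T by ring, hadd, ih, hneg]
  have decomp : ∀ (T : ℝ), 0 < T → ∀ x : X, φ T x = x →
      ∀ t : ℝ, φ t x = φ (T * Int.fract (t / T)) x := by
    intro T hT x hx t
    have ht : t = T * Int.fract (t / T) + (⌊t / T⌋ : ℝ) * T := by
      rw [Int.fract]
      field_simp
      ring
    conv_lhs => rw [ht]
    rw [hadd, key T x hx ⌊t / T⌋]
  choose x hx T hTpos hTlt hper using fun n : ℕ => h (1 / (n + 1)) (by positivity)
  obtain ⟨y, -, ψ, hψ, hlim⟩ := isCompact_univ.tendsto_subseq (fun n => Set.mem_univ (x n))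
  have hTb : ∀ n : ℕ, T (ψ n) ≤ 1 / (n + 1 : ℝ) := by
    intro n
    refine (hTlt (ψ n)).le.trans ?_
    apply one_div_le_one_div_of_le (by positivity)
    have h' : (n : ℝ) ≤ ψ n := by exact_mod_cast hψ.id_le n
    linarith
  have hTlim : Filter.Tendsto (fun n => T (ψ n)) Filter.atTop (nhds 0) := by
    refine squeeze_zero (fun n => (hTpos _).le) hTb ?_
    exact tendsto_one_div_add_atTop_nhds_zero_nat
  have hfix : ∀ t, φ t y = y := by
    intro t
    have hc : Continuous (φ t) := hcont.comp (Continuous.prodMk_right t)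
    have h1 : Filter.Tendsto (fun n => φ t (x (ψ n))) Filter.atTop (nhds (φ t y)) :=
      (hc.tendsto y).comp hlim
    have hs : Filter.Tendsto (fun n => T (ψ n) * Int.fract (t / T (ψ n)))
        Filter.atTop (nhds 0) := by
      refine squeeze_zero (fun n => ?_) (fun n => ?_) hTlim
      · exact mul_nonneg (hTpos _).le (Int.fract_nonneg _)
      · exact mul_le_of_le_one_right (hTpos _).le (Int.fract_lt_one _).le
    have h2 : Filter.Tendsto (fun n => φ (T (ψ n) * Int.fract (t / T (ψ n))) (x (ψ n)))
        Filter.atTop (nhds (φ 0 y)) :=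
      (hcont.tendsto ((0 : ℝ), y)).comp (hs.prodMk_nhds hlim)
    have heq : (fun n => φ (T (ψ n) * Int.fract (t / T (ψ n))) (x (ψ n)))
        = fun n => φ t (x (ψ n)) :=
      funext fun n => (decomp _ (hTpos _) _ (hper _) t).symm
    rw [heq, h0] at h2
    exact tendsto_nhds_unique h1 h2
  have hmem : y ∈ {x : X | ∀ t, φ t x = x} := hfix
  obtain ⟨n, hn⟩ := (hlim.eventually (hopen.mem_nhds hmem)).exists
  obtain ⟨t0, ht0⟩ := hx (ψ n)
  exact ht0 (hn t0)
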